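/- arXiv:1209.2042 — 3 statements merged into one kernel-verified Lean document; each statement's English description precedes it below -/
import Mathlib

section
/- Let S be a Noetherian topological space equipped with an associative multiplication S × S → S for which all left and right translations y ↦ ay and y ↦ ya are continuous. Let x ∈ S be such that for every integer n ≥ 1 the closure of the set {x^{nm} : m ≥ 1} of positive powers of x^n equals S. Then the set xS = {xy : y ∈ S} is dense in S, and S is irreducible. -/
/-- `sPow mul x n` is the `(n+1)`-st power `x^(n+1)` of `x` with respect to the
multiplication `mul`; thus it ranges over all positive powers of `x` as `n` ranges over `ℕ`. -/
def sPow {S : Type*} (mul : S → S → S) (x : S) : ℕ → S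
  | 0 => x
  | n + 1 => mul (sPow mul x n) x

/-- Let `S` be a Noetherian topological space with an associative multiplication whose left
and right translations are continuous.  Let `x ∈ S` be such that for every `n ≥ 1` the set
`{x^(n·m) : m ≥ 1}` of positive powers of `x^n` is dense in `S`.  Then `xS` is dense in `S`
and `S` is irreducible.  (Here, for `n, m : ℕ`, the exponent `(n+1)(m+1)` is written as
`n*m + n + m + 1`, i.e. `sPow mul x (n*m + n + m) = x^((n+1)(m+1))`.) -/
theorem stmt_2 {S : Type*} [TopologicalSpace S] [TopologicalSpace.NoetherianSpace S]
    (mul : S → S → S)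
    (hassoc : ∀ a b c : S, mul (mul a b) c = mul a (mul b c))
    (hcontl : ∀ a : S, Continuous fun y => mul a y)
    (hcontr : ∀ a : S, Continuous fun y => mul y a)
    (x : S)
    (hx : ∀ n : ℕ, Dense {y : S | ∃ m : ℕ, y = sPow mul x (n * m + n + m)}) :
    Dense (Set.range (mul x)) ∧ IrreducibleSpace S := by
  classical
  set L : S → S := fun y => mul y x with hLdef
  have hLc : Continuous L := hcontr x
  -- x^(k+2) = x * x^(k+1)
  have hpowl : ∀ k : ℕ, sPow mul x (k + 1) = mul x (sPow mul x k) := by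
    intro k
    induction k with
    | zero => rfl
    | succ k ih =>
      show mul (sPow mul x (k + 1)) x = mul x (sPow mul x (k + 1))
      conv_lhs => rw [ih]
      rw [hassoc]
      rfl
  -- Part 1 : density of x*S
  have hdense1 : Dense (Set.range (mul x)) := by
    refine (hx 1).mono ?_
    rintro y ⟨m, rfl⟩
    have harith : 1 * m + 1 + m = 2 * m + 1 := by ring
    rw [harith, hpowl]
    exact ⟨sPow mul x (2 * m), rfl⟩
  refine ⟨hdense1, ?_⟩
  -- choice function on components
  have hstep : ∀ C : Set S, ∃ D : Set S, C ∈ irreducibleComponents S →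
      D ∈ irreducibleComponents S ∧ closure (L '' C) ⊆ D := by
    intro C
    by_cases hC : C ∈ irreducibleComponents S
    · have hirr : IsIrreducible (closure (L '' C)) :=
        (hC.1.image L hLc.continuousOn).closure
      obtain ⟨u, hu, hsub, hmax⟩ := exists_preirreducible _ hirr.2
      refine ⟨u, fun _ => ⟨⟨⟨hirr.1.mono hsub, hu⟩, fun v hv hle => (hmax v hv.2 hle).le⟩, hsub⟩⟩
    · exact ⟨∅, fun h => absurd h hC⟩
  choose g hg using hstep
  set E : ℕ → Set S := fun n => g^[n] (irreducibleComponent x) with hEdef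
  have hEsucc : ∀ n, E (n + 1) = g (E n) := fun n =>
    Function.iterate_succ_apply' g n (irreducibleComponent x)
  have hEmem : ∀ n, E n ∈ irreducibleComponents S := by
    intro n
    induction n with
    | zero => exact irreducibleComponent_mem_irreducibleComponents x
    | succ n ih => rw [hEsucc]; exact (hg _ ih).1
  have hpowmem : ∀ n, sPow mul x n ∈ E n := by
    intro n
    induction n with
    | zero => exact mem_irreducibleComponent
    | succ n ih =>
      rw [hEsucc]
      exact (hg _ (hEmem n)).2 (subset_closure ⟨sPow mul x n, ih, rfl⟩)
  -- pigeonhole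
  obtain ⟨a, -, b, -, hab, hEab⟩ :=
    Set.Infinite.exists_ne_map_eq_of_mapsTo (Set.infinite_univ (α := ℕ))
      (fun n _ => hEmem n) TopologicalSpace.NoetherianSpace.finite_irreducibleComponents
  -- wlog a < b
  obtain ⟨j, d, hd, hper0⟩ : ∃ j d : ℕ, 1 ≤ d ∧ E (j + d) = E j := by
    rcases lt_or_gt_of_ne hab with h | h
    · exact ⟨a, b - a, by omega, by rw [show a + (b - a) = b by omega]; exact hEab.symm⟩
    · exact ⟨b, a - b, by omega, by rw [show b + (a - b) = a by omega]; exact hEab⟩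
  -- periodicity : E (j + t + d*s) = E (j + t)
  have hshift : ∀ t, E (j + d + t) = E (j + t) := by
    intro t
    have h1 : E (j + d + t) = g^[t] (E (j + d)) := by
      rw [hEdef]
      simp only []
      rw [show j + d + t = t + (j + d) by omega, Function.iterate_add_apply]
    have h2 : E (j + t) = g^[t] (E j) := by
      rw [hEdef]
      simp only []
      rw [show j + t = t + j by omega, Function.iterate_add_apply]
    rw [h1, h2, hper0]
  have hper : ∀ s t, E (j + t + d * s) = E (j + t) := by
    intro s
    induction s with
    | zero => simp
    | succ s ih =>
      intro t
      have : j + t + d * (s + 1) = j + d + (t + d * s) := by ring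
      rw [this, hshift, show j + (t + d * s) = j + t + d * s by ring, ih]
  -- the target component
  set N : ℕ := d * (j + 1) with hN
  have hN1 : 1 ≤ N := Nat.mul_pos (by omega) (Nat.succ_pos j)
  have hNj : j ≤ N - 1 := by
    have : j + 1 ≤ N := Nat.le_mul_of_pos_left _ (by omega)
    omega
  set D : Set S := E (N - 1) with hD
  have hDcomp := hEmem (N - 1)
  have hDclosed : IsClosed D := isClosed_of_mem_irreducibleComponents _ hDcomp
  -- all x^(N*(m+1)) lie in D
  have hsubD : {y : S | ∃ m : ℕ, y = sPow mul x ((N - 1) * m + (N - 1) + m)} ⊆ D := by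
    rintro y ⟨m, rfl⟩
    obtain ⟨K, hK⟩ : ∃ K, N = K + 1 := ⟨N - 1, by omega⟩
    have h2 : d * (j + 1) = K + 1 := by rw [← hN, hK]
    have h3 : d * ((j + 1) * m) = (K + 1) * m := by rw [← mul_assoc, h2]
    have h5 : N - 1 = K := by omega
    have hjK : j ≤ K := by omega
    have hidx : (N - 1) * m + (N - 1) + m = N - 1 + d * ((j + 1) * m) := by
      rw [h5, h3]; ring
    rw [hidx]
    have hE' : E (N - 1 + d * ((j + 1) * m)) = E (N - 1) := by
      have h := hper ((j + 1) * m) (N - 1 - j)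
      rwa [show j + (N - 1 - j) = N - 1 by omega] at h
    have hmem := hpowmem (N - 1 + d * ((j + 1) * m))
    rw [hE'] at hmem
    exact hmem
  -- D is dense and closed, hence univ
  have hDuniv : D = Set.univ := by
    apply Set.eq_univ_of_univ_subset
    have := (hx (N - 1)).closure_eq
    calc Set.univ = closure {y : S | ∃ m : ℕ, y = sPow mul x ((N - 1) * m + (N - 1) + m)} :=
          this.symm
      _ ⊆ closure D := closure_mono hsubD
      _ = D := hDclosed.closure_eq
  rw [irreducibleSpace_def]
  have : IsIrreducible D := hDcomp.1
  rwa [hDuniv] at this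
end

section
/- Let S be an irreducible topological space equipped with an associative multiplication S × S → S for which all left and right translations are continuous, and suppose the topological Krull dimension of S is finite, equal to d − 1 (so d = dim S + 1). Then for every y ∈ S and every integer m ≥ d, the closure of y^m S equals the closure of y^d S. -/
section aux

lemma sPow_succ_left {S : Type*} (mul : S → S → S)
    (hassoc : ∀ a b c : S, mul (mul a b) c = mul a (mul b c)) (y : S) (n : ℕ) : sPow mul y (n + 1) = mul y (sPow mul y n) := by
  induction n with
  | zero => rfl
  | succ n ih =>
      show mul (sPow mul y (n+1)) y = mul y (sPow mul y (n+1))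
      conv_lhs => rw [ih]
      rw [hassoc]
      rfl

end aux

/-- Let `S` be an irreducible topological semigroup (associative multiplication with
continuous left and right translations) of finite topological Krull dimension `d - 1`
(i.e. `d = dim S + 1`).  Then for every `y ∈ S` and every `m ≥ d`, the closure of
`y^m S` equals the closure of `y^d S`.  (Here `sPow mul y (m-1) = y^m`.) -/
theorem stmt_4 {S : Type*} [TopologicalSpace S] [IrreducibleSpace S]
    (mul : S → S → S)
    (hassoc : ∀ a b c : S, mul (mul a b) c = mul a (mul b c))
    (hcontl : ∀ a : S, Continuous fun y => mul a y)
    (hcontr : ∀ a : S, Continuous fun y => mul y a)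
    (d : ℕ) (hd : topologicalKrullDim S + 1 = d) :
    ∀ (y : S) (m : ℕ), d ≤ m →
      closure (Set.range (mul (sPow mul y (m - 1)))) =
        closure (Set.range (mul (sPow mul y (d - 1)))) := by
  intro y m hm
  -- the closed sets A n = closure (y^(n+1) S)
  set A : ℕ → Set S := fun n => closure (Set.range (mul (sPow mul y n))) with hA
  -- each A n is irreducible and closed
  have hirr : ∀ n, IsIrreducible (A n) := by
    intro n
    have : IsIrreducible (Set.range (mul (sPow mul y n))) := by
      rw [← Set.image_univ]
      exact (IrreducibleSpace.isIrreducible_univ S).image _ (hcontl _).continuousOn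
    exact this.closure
  have hclosed : ∀ n, IsClosed (A n) := fun n => isClosed_closure
  -- ranges are antitone
  have hrange : ∀ n, Set.range (mul (sPow mul y (n + 1))) ⊆ Set.range (mul (sPow mul y n)) := by
    rintro n _ ⟨z, rfl⟩
    exact ⟨mul y z, by simp only [sPow, hassoc]⟩
  have hanti : ∀ n, A (n + 1) ⊆ A n := fun n => closure_mono (hrange n)
  have hanti' : ∀ {a b : ℕ}, a ≤ b → A b ⊆ A a := by
    intro a b h
    induction h with
    | refl => exact le_refl _
    | step h ih => exact (hanti _).trans ih
  -- A (n+1) is the closure of the image of A n under left translation by y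
  have hAsucc : ∀ n, A (n + 1) = closure ((fun z => mul y z) '' A n) := by
    intro n
    have h1 : Set.range (mul (sPow mul y (n + 1)))
        = (fun z => mul y z) '' Set.range (mul (sPow mul y n)) := by
      rw [sPow_succ_left mul hassoc, ← Set.range_comp]
      exact congrArg Set.range (funext fun z => hassoc y (sPow mul y n) z)
    apply subset_antisymm
    · rw [hA]
      exact closure_mono (h1 ▸ Set.image_mono subset_closure)
    · apply closure_minimal _ (hclosed _)
      calc (fun z => mul y z) '' A n
          ⊆ closure ((fun z => mul y z) '' Set.range (mul (sPow mul y n))) :=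
            (hcontl y).continuousOn.image_closure
        _ ⊆ A (n + 1) := by rw [hA]; exact closure_mono (by rw [h1])
  -- once two consecutive terms agree, the sequence is constant afterwards
  have hstab : ∀ k, A k = A (k + 1) → ∀ n, k ≤ n → A n = A k := by
    intro k hk n hn
    induction n with
    | zero =>
        have hk0 : k = 0 := Nat.le_zero.mp hn
        rw [hk0]
    | succ n ih =>
        rcases Nat.lt_or_ge k (n + 1) with h | h
        · have hkn : k ≤ n := Nat.lt_succ_iff.mp h
          have hn' : A n = A k := ih hkn
          rw [hAsucc n, hn', ← hAsucc k]
          exact hk.symm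
        · exact le_antisymm (hanti' hn) (hanti' h)
  -- d ≥ 1
  have hd1 : 1 ≤ d := by
    by_contra h
    have hd0 : d = 0 := by omega
    rw [hd0] at hd
    haveI : Nonempty (TopologicalSpace.IrreducibleCloseds S) :=
      ⟨⟨Set.univ, IrreducibleSpace.isIrreducible_univ S, isClosed_univ⟩⟩
    have h0 : (0 : WithBot ℕ∞) ≤ topologicalKrullDim S :=
      Order.krullDim_nonneg (α := TopologicalSpace.IrreducibleCloseds S)
    have : (1 : WithBot ℕ∞) ≤ topologicalKrullDim S + 1 := by
      calc (1 : WithBot ℕ∞) = 0 + 1 := by norm_num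
        _ ≤ topologicalKrullDim S + 1 := add_le_add_left h0 1
    rw [hd] at this
    norm_num at this
  -- there is some k < d with A k = A (k+1)
  have hex : ∃ k, k < d ∧ A k = A (k + 1) := by
    by_contra h
    push_neg at h
    have hstrict : ∀ k, k < d → A (k + 1) ⊂ A k := by
      intro k hk
      exact (HasSubset.Subset.ssubset_of_ne (hanti k) (fun he => h k hk he.symm))
    -- build an LTSeries of length d in IrreducibleCloseds S
    let Z : ℕ → TopologicalSpace.IrreducibleCloseds S := fun i =>
      ⟨A (d - i), hirr _, hclosed _⟩
    have hchain : ∀ i : Fin d, Z i.castSucc < Z i.succ := by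
      intro i
      have hi : (i : ℕ) < d := i.isLt
      have h1 : (d - (i + 1) : ℕ) + 1 = d - i := by omega
      have := hstrict (d - (i + 1)) (by omega)
      rw [h1] at this
      simpa [Z, ← SetLike.coe_ssubset_coe, Fin.coe_castSucc, Fin.val_succ] using this
    let p : LTSeries (TopologicalSpace.IrreducibleCloseds S) :=
      ⟨d, fun i => Z i, hchain⟩
    have hle : (d : WithBot ℕ∞) ≤ topologicalKrullDim S := Order.LTSeries.length_le_krullDim p
    have : (d : WithBot ℕ∞) + 1 ≤ topologicalKrullDim S + 1 := add_le_add_left hle 1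
    rw [hd] at this
    have hcast : ((d : ℕ) : WithBot ℕ∞) + 1 = ((d + 1 : ℕ) : WithBot ℕ∞) := by
      push_cast; ring
    rw [hcast, Nat.cast_le] at this
    omega
  obtain ⟨k, hk, hkeq⟩ := hex
  have h1 : A (m - 1) = A k := hstab k hkeq (m - 1) (by omega)
  have h2 : A (d - 1) = A k := hstab k hkeq (d - 1) (by omega)
  show A (m - 1) = A (d - 1)
  rw [h1, h2]
end

section
/- Let X be a topological space with only finitely many irreducible components X_1, …, X_r, and let f : X → X be a continuous map whose image f(X) is dense in X. Then there is a permutation σ of {1, …, r} such that the closure of f(X_i) equals X_{σ(i)} for every i; in particular the closure of the image of each irreducible component is again an irreducible component. -/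
/-- Every irreducible set is contained in an irreducible component. -/
lemma subset_some_irreducibleComponent {X : Type*} [TopologicalSpace X] {s : Set X}
    (hs : IsIrreducible s) : ∃ t ∈ irreducibleComponents X, s ⊆ t := by
  obtain ⟨t, htpre, hst, hmax⟩ := exists_preirreducible s hs.2
  exact ⟨t, ⟨⟨hs.1.mono hst, htpre⟩, fun u hu htu => (hmax u hu.2 htu).le⟩, hst⟩

/-- Let `X` be a topological space with exactly finitely many irreducible components
`C 0, …, C (r-1)` (listed without repetition), and let `f : X → X` be a continuous map
with dense image.  Then there is a permutation `σ` of the index set such that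
`closure (f '' C i) = C (σ i)` for every `i`; in particular the closure of the image of
each irreducible component is again an irreducible component. -/
theorem stmt_15 {X : Type*} [TopologicalSpace X] (r : ℕ)
    (C : Fin r → Set X) (hC_inj : Function.Injective C)
    (hC_mem : ∀ i, C i ∈ irreducibleComponents X)
    (hC_all : ∀ Z ∈ irreducibleComponents X, ∃ i, Z = C i)
    (f : X → X) (hf : Continuous f) (hdense : Dense (Set.range f)) :
    ∃ σ : Equiv.Perm (Fin r), ∀ i, closure (f '' C i) = C (σ i) := by
  set D : Fin r → Set X := fun i => closure (f '' C i) with hD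
  -- each D i is irreducible
  have hDirr : ∀ i, IsIrreducible (D i) := fun i =>
    (((hC_mem i).1).image f hf.continuousOn).closure
  -- choose g i with D i ⊆ C (g i)
  have hg : ∀ i, ∃ j, D i ⊆ C j := by
    intro i
    obtain ⟨t, ht, hsub⟩ := subset_some_irreducibleComponent (hDirr i)
    obtain ⟨j, rfl⟩ := hC_all t ht
    exact ⟨j, hsub⟩
  choose g hgsub using hg
  -- the components cover X
  have hcover : ∀ x : X, ∃ i, x ∈ C i := by
    intro x
    obtain ⟨i, hi⟩ := hC_all _ (irreducibleComponent_mem_irreducibleComponents x)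
    exact ⟨i, hi ▸ mem_irreducibleComponent⟩
  -- the D i cover X
  have hDuniv : (⋃ i, D i) = Set.univ := by
    apply Set.eq_univ_of_univ_subset
    have hclosed : IsClosed (⋃ i, D i) := isClosed_iUnion_of_finite fun i => isClosed_closure
    have hr : Set.range f ⊆ ⋃ i, D i := by
      rintro _ ⟨y, rfl⟩
      obtain ⟨i, hi⟩ := hcover y
      exact Set.mem_iUnion.2 ⟨i, subset_closure ⟨y, hi, rfl⟩⟩
    calc Set.univ = closure (Set.range f) := hdense.closure_eq.symm
    _ ⊆ ⋃ i, D i := hclosed.closure_subset_iff.2 hr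
  -- any irreducible component is contained in some D i
  have hkey : ∀ s ∈ irreducibleComponents X, ∃ i, s ⊆ D i := by
    intro s hs
    classical
    obtain ⟨z, hz, hsz⟩ := isIrreducible_iff_sUnion_isClosed.mp hs.1
      (Finset.univ.image D)
      (by intro z hz
          obtain ⟨i, -, rfl⟩ := Finset.mem_image.mp hz
          exact isClosed_closure)
      (by intro x hx
          obtain ⟨i, hi⟩ : ∃ i, x ∈ D i := Set.mem_iUnion.mp (hDuniv ▸ Set.mem_univ x)
          exact ⟨D i, Finset.mem_coe.mpr (Finset.mem_image_of_mem D (Finset.mem_univ i)), hi⟩)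
    obtain ⟨i, _, rfl⟩ := Finset.mem_image.mp hz
    exact ⟨i, hsz⟩
  -- g is surjective
  have hsurj : Function.Surjective g := by
    intro j
    obtain ⟨i, hi⟩ := hkey (C j) (hC_mem j)
    have : C (g i) = C j := by
      have h1 : C j ⊆ C (g i) := hi.trans (hgsub i)
      exact le_antisymm ((hC_mem j).2 (hC_mem (g i)).1 h1) h1
    exact ⟨i, hC_inj this⟩
  have hbij : Function.Bijective g := Finite.surjective_iff_bijective.mp hsurj
  -- equality D i = C (g i)
  have heq : ∀ i, D i = C (g i) := by
    intro i
    refine le_antisymm (hgsub i) ?_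
    obtain ⟨k, hk⟩ := hkey (C (g i)) (hC_mem (g i))
    have hgik : C (g i) = C (g k) := by
      have h1 : C (g i) ⊆ C (g k) := hk.trans (hgsub k)
      exact le_antisymm h1 ((hC_mem (g i)).2 (hC_mem (g k)).1 h1)
    have : i = k := hbij.1 (hC_inj hgik)
    exact this ▸ hk
  exact ⟨Equiv.ofBijective g hbij, fun i => heq i⟩
end
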